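/- Let K_n = (V, E) be the complete graph on n vertices, k a positive integer, and w : E → ℝ a weight function such that ∑_{e ∈ X} w(e) ≥ 0 for every vertex v ∈ V and every X ⊆ δ(v) with |X| ≥ k, where δ(v) denotes the set of edges incident to v. Then the cut function c : 2^V → ℝ defined by c(T) = ∑_{e = (u,v) ∈ E, u ∈ T, v ∉ T} w(e) is (2k−1)-distant submodular. -/
import Mathlib


open scoped symmDiff

/-- A set function `f` on subsets of a finite type is `k`-distant submodular if the
submodular inequality holds for every pair whose symmetric difference has size at least `k`. -/
def DistantSubmodular {α : Type*} [DecidableEq α] (k : ℕ) (f : Finset α → ℝ) : Prop :=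
  ∀ X Y : Finset α, k ≤ (X ∆ Y).card → f (X ∪ Y) + f (X ∩ Y) ≤ f X + f Y

/-- The cut function of the complete graph on vertex set `V` with symmetric edge weights `w`:
`c T` is the total weight of edges with exactly one endpoint in `T`. -/
def cutFun {V : Type*} [Fintype V] [DecidableEq V] (w : V → V → ℝ) (T : Finset V) : ℝ :=
  ∑ u ∈ T, ∑ v ∈ Tᶜ, w u v

lemma helper_sum {V : Type*} [Fintype V] [DecidableEq V] (P Q : Finset V) (f : V → V → ℝ) :
    (∑ u : V, ∑ v : V, if u ∈ P ∧ v ∈ Q then f u v else 0) = ∑ u ∈ P, ∑ v ∈ Q, f u v := by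
  rw [show (∑ u : V, ∑ v : V, if u ∈ P ∧ v ∈ Q then f u v else 0)
      = ∑ u : V, (if u ∈ P then ∑ v ∈ Q, f u v else 0) from
      Finset.sum_congr rfl fun u _ => by
        by_cases hu : u ∈ P <;> simp [hu, Finset.sum_ite_mem]]
  simp [Finset.sum_ite_mem]

lemma cutFun_eq {V : Type*} [Fintype V] [DecidableEq V] (w : V → V → ℝ) (T : Finset V) :
    cutFun w T = ∑ u : V, ∑ v : V, if u ∈ T ∧ v ∈ Tᶜ then w u v else 0 := by
  rw [helper_sum]; rfl

theorem stmt_1 {V : Type*} [Fintype V] [DecidableEq V] (k : ℕ) (hk : 1 ≤ k)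
    (w : V → V → ℝ) (hsym : ∀ u v : V, w u v = w v u)
    (hpos : ∀ (v : V) (A : Finset V), v ∉ A → k ≤ A.card → 0 ≤ ∑ u ∈ A, w v u) :
    DistantSubmodular (2 * k - 1) (cutFun w) := by
  intro X Y hcard
  set A := X \ Y with hA
  set B := Y \ X with hB
  -- the key identity
  have key : cutFun w (X ∪ Y) + cutFun w (X ∩ Y)
      + ((∑ u ∈ A, ∑ v ∈ B, w u v) + (∑ u ∈ B, ∑ v ∈ A, w u v))
      = cutFun w X + cutFun w Y := by
    rw [← helper_sum A B w, ← helper_sum B A w, cutFun_eq, cutFun_eq, cutFun_eq, cutFun_eq,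
      ← Finset.sum_add_distrib, ← Finset.sum_add_distrib]
    simp only [← Finset.sum_add_distrib]
    refine Finset.sum_congr rfl fun u _ => Finset.sum_congr rfl fun v _ => ?_
    by_cases hux : u ∈ X <;> by_cases huy : u ∈ Y <;> by_cases hvx : v ∈ X <;>
      by_cases hvy : v ∈ Y <;> simp [hA, hB, hux, huy, hvx, hvy]
  -- cardinality: one of A, B has at least k elements
  have hcard' : 2 * k - 1 ≤ A.card + B.card := by
    rwa [symmDiff_def, Finset.sup_eq_union, Finset.card_union_of_disjoint disjoint_sdiff_sdiff] at hcard
  have hAB : k ≤ A.card ∨ k ≤ B.card := by omega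
  -- nonnegativity of the gap
  have hBA : ∀ (P Q : Finset V), k ≤ P.card → Disjoint P Q →
      0 ≤ ∑ u ∈ Q, ∑ v ∈ P, w u v := by
    intro P Q hP hd
    refine Finset.sum_nonneg fun u hu => ?_
    exact hpos u P (Finset.disjoint_right.mp hd hu) hP
  have hdisj : Disjoint A B := disjoint_sdiff_sdiff
  have hswap : (∑ u ∈ A, ∑ v ∈ B, w u v) = ∑ u ∈ B, ∑ v ∈ A, w u v := by
    rw [Finset.sum_comm]
    exact Finset.sum_congr rfl fun u _ => Finset.sum_congr rfl fun v _ => hsym v u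
  have hgap : 0 ≤ (∑ u ∈ A, ∑ v ∈ B, w u v) + (∑ u ∈ B, ∑ v ∈ A, w u v) := by
    rcases hAB with h | h
    · have h2 := hBA A B h hdisj
      rw [hswap]; linarith
    · have h2 := hBA B A h hdisj.symm
      linarith [hswap]
  linarith [key]
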